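/- The exact FLRW two-way Doppler formula for radial motion, ω₂/ω₀ = (a₀/a₂)·[(1−β)/(1+β)] combined with dt₁/dt₂ = (a₁/a₂)(1+β)^{−1}, yields the approximate tracking formula −(1/2)·d/dt₂(ω₂/ω₀) = α(1 − 3β − 3HΔt) + Hβ + O(β³, (HΔt)², βHΔt·β), where α = (1/c)dβ/dt₁ is the radial acceleration over c; in particular, expanding (a₀a₁/a₂²)·{α(1+β)^{−3} + (1/2)[ȧ₂/a₁ − (ȧ₀/a₁)((1−β)/(1+β))]((1−β)/(1+β))} to the stated order in β and HΔt reproduces α(1 − 3β − 3HΔt) + Hβ. -/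

import Mathlib

private lemma abs_add_le' {x y s t : ℝ} (hx : |x| ≤ s) (hy : |y| ≤ t) :
    |x + y| ≤ s + t := (abs_add_le _ _).trans (add_le_add hx hy)

set_option maxHeartbeats 4000000 in
/-- Expanding the exact two-way FLRW Doppler-rate expression
`(a₀a₁/a₂²){α(1+β)⁻³ + (1/2)[ȧ₂/a₁ − (ȧ₀/a₁)((1−β)/(1+β))]((1−β)/(1+β))}`
with `a₀/a₂ = 1 − 2HΔt`, `a₁/a₂ = 1 − HΔt`, `ȧᵢ/a₁ = H`, keeping quadratic
terms in `β`, linear terms in `HΔt`, and mixed terms `βHΔt` (all of order `ε`,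
with `β = bε`, `HΔt = dε`, `α = Aε` in units `Δt = 1`, hence `H = dε`),
yields `α(1 − 3β − 3HΔt) + Hβ` up to `O(ε³)`. -/
theorem flrw_doppler_rate_expansion (b d A : ℝ) :
    ∃ C δ : ℝ, 0 < C ∧ 0 < δ ∧ ∀ ε : ℝ, 0 < ε → ε < δ →
      |(1 - 2 * (d * ε)) * (1 - d * ε) *
          ((A * ε) * (1 + b * ε)⁻¹ ^ 3 +
            (1 / 2) * ((d * ε) - (d * ε) * ((1 - b * ε) / (1 + b * ε))) *
              ((1 - b * ε) / (1 + b * ε)))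
        - ((A * ε) * (1 - 3 * (b * ε) - 3 * (d * ε)) + (d * ε) * (b * ε))|
      ≤ C * ε ^ 3 := by
  set K : ℝ := |b| + |d| + |A| + 1 with hKdef
  have hK1 : (1:ℝ) ≤ K := by
    have := abs_nonneg b; have := abs_nonneg d; have := abs_nonneg A
    rw [hKdef]; linarith
  have hK0 : (0:ℝ) < K := by linarith
  refine ⟨464 * K ^ 6, min 1 (1 / (2 * (|b| + 1))), by positivity, ?_, ?_⟩
  · have : (0:ℝ) < 1 / (2 * (|b| + 1)) := by positivity
    exact lt_min one_pos this
  intro ε hε hεδ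
  have hε1 : ε ≤ 1 := le_trans hεδ.le (min_le_left _ _)
  have hεb : ε ≤ 1 / (2 * (|b| + 1)) := le_trans hεδ.le (min_le_right _ _)
  have hb0 : (0:ℝ) < |b| + 1 := by positivity
  have hbe : |b * ε| ≤ 1 / 2 := by
    rw [abs_mul, abs_of_pos hε]
    calc |b| * ε ≤ (|b| + 1) * (1 / (2 * (|b| + 1))) := by
          apply mul_le_mul (by linarith [abs_nonneg b]) hεb hε.le (by positivity)
      _ = 1 / 2 := by field_simp
  have hden : (1:ℝ) / 2 ≤ 1 + b * ε := by
    have h := (abs_le.mp hbe).1; linarith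
  have hdenpos : (0:ℝ) < 1 + b * ε := by linarith
  have hne : (1 + b * ε) ≠ 0 := ne_of_gt hdenpos
  set u : ℝ := b * ε with hudef
  set v : ℝ := d * ε with hvdef
  set w : ℝ := A * ε with hwdef
  set N : ℝ := 2*(u^0*v^2*w^1) + (9*(u^1*v^1*w^1) + (-(3*(u^1*v^2*w^0)) +
      (2*(u^1*v^3*w^0) + (6*(u^2*v^0*w^1) + (-(3*(u^2*v^1*w^0)) +
      (9*(u^2*v^1*w^1) + (8*(u^3*v^0*w^1) + (-(4*(u^3*v^1*w^0)) +
      (3*(u^3*v^1*w^1) + (3*(u^3*v^2*w^0) + (-(2*(u^3*v^3*w^0)) +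
      (3*(u^4*v^0*w^1) + -(1*(u^4*v^1*w^0)))))))))))))) with hNdef
  have hid : (1 - 2 * v) * (1 - v) *
          (w * (1 + u)⁻¹ ^ 3 +
            (1 / 2) * (v - v * ((1 - u) / (1 + u))) * ((1 - u) / (1 + u)))
        - (w * (1 - 3 * u - 3 * v) + v * u) = N / (1 + u) ^ 3 := by
    rw [hNdef]
    field_simp
    ring
  rw [hid, abs_div, abs_pow]
  set Q : ℝ := K * ε with hQdef
  have hQ0 : 0 ≤ Q := by positivity
  have hQK : Q ≤ K := by
    calc Q = K * ε := rfl
      _ ≤ K * 1 := by nlinarith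
      _ = K := mul_one K
  have hu : |u| ≤ Q := by
    rw [hudef, hQdef, abs_mul, abs_of_pos hε]
    have : |b| ≤ K := by rw [hKdef]; linarith [abs_nonneg d, abs_nonneg A]
    nlinarith
  have hv : |v| ≤ Q := by
    rw [hvdef, hQdef, abs_mul, abs_of_pos hε]
    have : |d| ≤ K := by rw [hKdef]; linarith [abs_nonneg b, abs_nonneg A]
    nlinarith
  have hw : |w| ≤ Q := by
    rw [hwdef, hQdef, abs_mul, abs_of_pos hε]
    have : |A| ≤ K := by rw [hKdef]; linarith [abs_nonneg b, abs_nonneg d]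
    nlinarith
  -- generic monomial bound
  have B : ∀ i j k : ℕ, |u ^ i * v ^ j * w ^ k| ≤ Q ^ i * Q ^ j * Q ^ k := by
    intro i j k
    rw [abs_mul, abs_mul, abs_pow, abs_pow, abs_pow]
    gcongr <;> first | exact abs_nonneg _ | exact hu | exact hv | exact hw
  have T : ∀ (c : ℝ) (i j k : ℕ), 0 ≤ c →
      |c * (u ^ i * v ^ j * w ^ k)| ≤ c * (Q ^ i * Q ^ j * Q ^ k) := by
    intro c i j k hc
    rw [abs_mul, abs_of_nonneg hc]
    exact mul_le_mul_of_nonneg_left (B i j k) hc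
  have T' : ∀ (c : ℝ) (i j k : ℕ), 0 ≤ c →
      |(-(c * (u ^ i * v ^ j * w ^ k)))| ≤ c * (Q ^ i * Q ^ j * Q ^ k) := by
    intro c i j k hc
    rw [abs_neg]; exact T c i j k hc
  have hN : |N| ≤ 23 * Q ^ 3 + 23 * Q ^ 4 + 10 * Q ^ 5 + 2 * Q ^ 6 := by
    have h1 := abs_add_le' (T 2 0 2 1 (by norm_num)) (abs_add_le'
      (T 9 1 1 1 (by norm_num)) (abs_add_le' (T' 3 1 2 0 (by norm_num))
      (abs_add_le' (T 2 1 3 0 (by norm_num)) (abs_add_le'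
      (T 6 2 0 1 (by norm_num)) (abs_add_le' (T' 3 2 1 0 (by norm_num))
      (abs_add_le' (T 9 2 1 1 (by norm_num)) (abs_add_le'
      (T 8 3 0 1 (by norm_num)) (abs_add_le' (T' 4 3 1 0 (by norm_num))
      (abs_add_le' (T 3 3 1 1 (by norm_num)) (abs_add_le'
      (T 3 3 2 0 (by norm_num)) (abs_add_le' (T' 2 3 3 0 (by norm_num))
      (abs_add_le' (T 3 4 0 1 (by norm_num)) (T' 1 4 1 0 (by norm_num))))))))))))))
    rw [← hNdef] at h1
    calc |N| ≤ _ := h1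
      _ = 23 * Q ^ 3 + 23 * Q ^ 4 + 10 * Q ^ 5 + 2 * Q ^ 6 := by ring
  have hK3 : (1:ℝ) ≤ K ^ 3 := one_le_pow₀ hK1
  have hK2 : (1:ℝ) ≤ K ^ 2 := by nlinarith
  have hKK3 : K ≤ K ^ 3 := by nlinarith [mul_nonneg hK0.le (sub_nonneg.mpr hK2)]
  have c1 : Q ≤ K ^ 3 := hQK.trans hKK3
  have c2 : Q ^ 2 ≤ K ^ 3 := by nlinarith [pow_le_pow_left₀ hQ0 hQK 2]
  have c3 : Q ^ 3 ≤ K ^ 3 := pow_le_pow_left₀ hQ0 hQK 3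
  have hN2 : |N| ≤ 58 * Q ^ 3 * K ^ 3 := by
    have e3 : Q ^ 3 ≤ Q ^ 3 * K ^ 3 := by
      nlinarith [mul_le_mul_of_nonneg_left hK3 (pow_nonneg hQ0 3)]
    have e4 : Q ^ 4 ≤ Q ^ 3 * K ^ 3 := by
      calc Q ^ 4 = Q ^ 3 * Q := by ring
        _ ≤ Q ^ 3 * K ^ 3 := by gcongr
    have e5 : Q ^ 5 ≤ Q ^ 3 * K ^ 3 := by
      calc Q ^ 5 = Q ^ 3 * Q ^ 2 := by ring
        _ ≤ Q ^ 3 * K ^ 3 := by gcongr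
    have e6 : Q ^ 6 ≤ Q ^ 3 * K ^ 3 := by
      calc Q ^ 6 = Q ^ 3 * Q ^ 3 := by ring
        _ ≤ Q ^ 3 * K ^ 3 := by gcongr
    linarith
  have hdenb : (1/8 : ℝ) ≤ |1 + u| ^ 3 := by
    rw [abs_of_pos hdenpos]
    calc (1/8 : ℝ) = (1/2) ^ 3 := by norm_num
      _ ≤ (1 + u) ^ 3 := pow_le_pow_left₀ (by norm_num) hden 3
  calc |N| / |1 + u| ^ 3 ≤ (58 * Q ^ 3 * K ^ 3) / (1/8) := by
        apply div_le_div₀ (by positivity) hN2 (by norm_num) hdenb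
    _ = 464 * K ^ 6 * ε ^ 3 := by rw [hQdef]; ring
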